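/- Half of Theorem 1 (primal bound): for any parameters (φ̄, γ̄') with ∑_r φ̄_r A_r + diag(γ̄') ⪰ 0 and each λ_r := λ_min(A_r) ≤ 0 and λ'_r := λ_min(-A_r) ≤ 0, and for any feasible solution (ȳ, Ȳ, X̄) of the rank relaxation (SDP) (i.e., ⟨A_r, X̄⟩ + a_rᵀȳ = b_r for all r, the diagonal magnitude bounds on X̄ hold, y-box bounds hold, [[1, ȳᵀ],[ȳ, Ȳ]] ⪰ 0, and X̄ ⪰ 0), the point (x, y, z) = (0, ȳ, diag-vector of X̄) is feasible for the convex relaxation (OPF̄_{φ̄,γ̄'}) and its objective value h_{φ̄,γ̄'}(0, ȳ, D(X̄)) is at most the SDP objective ∑ᵢ(Cᵢᵢ Ȳᵢᵢ + cᵢ ȳᵢ). Hence v(OPF̄_{φ̄,γ̄'}) ≤ v(SDP). -/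

import Mathlib

open Matrix

noncomputable def lmin {ι : Type*} [Fintype ι] [DecidableEq ι] [Nonempty ι]
    {A : Matrix ι ι ℝ} (hA : A.IsHermitian) : ℝ := ⨅ i, hA.eigenvalues i

lemma diag_nonneg'' {ι : Type*} [Fintype ι] [DecidableEq ι] {M : Matrix ι ι ℝ}
    (h : M.PosSemidef) (i : ι) : 0 ≤ M i i := by
  simpa using h.dotProduct_mulVec_nonneg (Pi.single i 1)

lemma lmin_le_eig {ι : Type*} [Fintype ι] [DecidableEq ι] [Nonempty ι]
    {A : Matrix ι ι ℝ} (hA : A.IsHermitian) (i : ι) : lmin hA ≤ hA.eigenvalues i :=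
  ciInf_le (Set.Finite.bddBelow (Set.finite_range _)) i

lemma lmin_mul_trace_le {ι : Type*} [Fintype ι] [DecidableEq ι] [Nonempty ι]
    {A X : Matrix ι ι ℝ} (hA : A.IsHermitian) (hX : X.PosSemidef) :
    lmin hA * X.trace ≤ (A * X).trace := by
  classical
  have hspec := hA.spectral_theorem
  have hUU := Matrix.mem_unitaryGroup_iff.mp (hA.eigenvectorUnitary).2
  obtain ⟨U, hUdef⟩ : ∃ U : Matrix ι ι ℝ, (hA.eigenvectorUnitary : Matrix ι ι ℝ) = U := ⟨_, rfl⟩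
  rw [Unitary.conjStarAlgAut_apply] at hspec
  rw [hUdef] at hspec hUU
  set M : Matrix ι ι ℝ := star U * X * U with hM
  have hMpsd : M.PosSemidef := by
    rw [hM, Matrix.star_eq_conjTranspose]
    exact hX.conjTranspose_mul_mul_same U
  have h1 : M.trace = X.trace := by
    rw [hM, Matrix.trace_mul_cycle, hUU, Matrix.one_mul]
  have h2 : (A * X).trace = ∑ i, hA.eigenvalues i * M i i := by
    conv_lhs => rw [hspec]
    rw [show U * diagonal (RCLike.ofReal ∘ hA.eigenvalues) * star U * X
        = U * (diagonal (RCLike.ofReal ∘ hA.eigenvalues) * star U * X) from by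
          noncomm_ring,
      Matrix.trace_mul_comm,
      show diagonal (RCLike.ofReal ∘ hA.eigenvalues) * star U * X * U
        = diagonal (RCLike.ofReal ∘ hA.eigenvalues) * M from by rw [hM]; noncomm_ring]
    simp [Matrix.trace, Matrix.diagonal_mul, Matrix.diag]
  have h3 : M.trace = ∑ i, M i i := rfl
  calc lmin hA * X.trace = ∑ i, lmin hA * M i i := by
        rw [← h1, h3, Finset.mul_sum]
    _ ≤ ∑ i, hA.eigenvalues i * M i i :=
        Finset.sum_le_sum fun i _ =>
          mul_le_mul_of_nonneg_right (lmin_le_eig hA i) (diag_nonneg'' hMpsd i)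
    _ = (A * X).trace := h2.symm

lemma trace_mul_nonneg' {ι : Type*} [Fintype ι] [DecidableEq ι] [Nonempty ι]
    {S X : Matrix ι ι ℝ} (hS : S.PosSemidef) (hX : X.PosSemidef) :
    0 ≤ (S * X).trace := by
  refine le_trans ?_ (lmin_mul_trace_le hS.1 hX)
  have h1 : 0 ≤ lmin hS.1 := le_ciInf fun i => hS.eigenvalues_nonneg i
  have h2 : 0 ≤ X.trace := Finset.sum_nonneg fun i _ => diag_nonneg'' hX i
  exact mul_nonneg h1 h2

/-- Primal half of Theorem 1: from any feasible solution `(ȳ, Ȳ, X̄)` of the rank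
relaxation (SDP), the point `(x, y, z) = (0, ȳ, diag X̄)` is feasible for the compact
quadratic convex relaxation and its objective value is at most the SDP objective. -/
theorem stmt_12 {n m : ℕ} [NeZero n] {C : Type*} [Fintype C]
    -- data
    (A : C → Matrix (Fin n ⊕ Fin n) (Fin n ⊕ Fin n) ℝ)
    (hA : ∀ r, (A r).IsHermitian)
    (a : C → Fin m → ℝ) (b : C → ℝ)
    (Cd c : Fin m → ℝ) (hCd : ∀ i, 0 ≤ Cd i)
    (ylo yhi : Fin m → ℝ) (vlo vhi : Fin n → ℝ)
    -- parameters making the reformulation convex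
    (φ : C → ℝ) (γ' : (Fin n ⊕ Fin n) → ℝ)
    (hconv : (∑ r, φ r • A r + Matrix.diagonal γ').PosSemidef)
    (hlam : ∀ r, lmin (hA r) ≤ 0 ∧ lmin (hA r).neg ≤ 0)
    -- a feasible solution of the rank relaxation (SDP)
    (ybar : Fin m → ℝ) (Ybar : Matrix (Fin m) (Fin m) ℝ)
    (Xbar : Matrix (Fin n ⊕ Fin n) (Fin n ⊕ Fin n) ℝ)
    (heq : ∀ r, (A r * Xbar).trace + a r ⬝ᵥ ybar = b r)
    (hmag : ∀ i : Fin n, vlo i ≤ Xbar (Sum.inl i) (Sum.inl i) + Xbar (Sum.inr i) (Sum.inr i) ∧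
        Xbar (Sum.inl i) (Sum.inl i) + Xbar (Sum.inr i) (Sum.inr i) ≤ vhi i)
    (hbox : ∀ i, ylo i ≤ ybar i ∧ ybar i ≤ yhi i)
    (hblock : (Matrix.fromBlocks (Matrix.of fun _ _ : Unit => (1 : ℝ))
        (Matrix.of fun _ j => ybar j) (Matrix.of fun i _ => ybar i) Ybar).PosSemidef)
    (hXpsd : Xbar.PosSemidef) :
    -- the lifted point (x, y, z) = (0, ȳ, D(X̄))
    (∀ r, (0 : (Fin n ⊕ Fin n) → ℝ) ⬝ᵥ (A r).mulVec 0 + a r ⬝ᵥ ybar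
        - lmin (hA r) * ∑ s, ((0 : (Fin n ⊕ Fin n) → ℝ) s ^ 2 - Xbar s s) ≤ b r) ∧
    (∀ r, -((0 : (Fin n ⊕ Fin n) → ℝ) ⬝ᵥ (A r).mulVec 0) - a r ⬝ᵥ ybar
        - lmin (hA r).neg * ∑ s, ((0 : (Fin n ⊕ Fin n) → ℝ) s ^ 2 - Xbar s s) ≤ -(b r)) ∧
    (∀ i : Fin n, vlo i ≤ Xbar (Sum.inl i) (Sum.inl i) + Xbar (Sum.inr i) (Sum.inr i) ∧
        Xbar (Sum.inl i) (Sum.inl i) + Xbar (Sum.inr i) (Sum.inr i) ≤ vhi i) ∧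
    (∀ i, ylo i ≤ ybar i ∧ ybar i ≤ yhi i) ∧
    (∀ s, ((0 : (Fin n ⊕ Fin n) → ℝ) s) ^ 2 ≤ Xbar s s ∧
        Xbar s s ≤ (Real.sqrt (Sum.elim vhi vhi s) + (-Real.sqrt (Sum.elim vhi vhi s)))
              * (0 : (Fin n ⊕ Fin n) → ℝ) s
            - Real.sqrt (Sum.elim vhi vhi s) * (-Real.sqrt (Sum.elim vhi vhi s))) ∧
    -- objective comparison : h_{φ,γ'}(0, ȳ, D(X̄)) ≤ SDP objective
    ((∑ i, (Cd i * ybar i ^ 2 + c i * ybar i)) +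
      (∑ r, φ r * ((0 : (Fin n ⊕ Fin n) → ℝ) ⬝ᵥ (A r).mulVec 0 + a r ⬝ᵥ ybar - b r)) +
      (∑ s, γ' s * (((0 : (Fin n ⊕ Fin n) → ℝ) s) ^ 2 - Xbar s s)) ≤
      ∑ i, (Cd i * Ybar i i + c i * ybar i)) := by
  have hdiag : ∀ s, 0 ≤ Xbar s s := diag_nonneg'' hXpsd
  have htr : (∑ s, ((0 : (Fin n ⊕ Fin n) → ℝ) s ^ 2 - Xbar s s)) = -Xbar.trace := by
    simp [Matrix.trace, Matrix.diag]
  have htrX : 0 ≤ Xbar.trace := Finset.sum_nonneg fun s _ => hdiag s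
  refine ⟨?_, ?_, hmag, hbox, ?_, ?_⟩
  · intro r
    have h1 := lmin_mul_trace_le (hA r) hXpsd
    have h2 := heq r
    simp only [zero_dotProduct, zero_add, htr]
    nlinarith [h1, h2]
  · intro r
    have h1 := lmin_mul_trace_le (hA r).neg hXpsd
    have h2 := heq r
    rw [Matrix.neg_mul, Matrix.trace_neg] at h1
    simp only [zero_dotProduct, neg_zero, zero_sub, htr]
    nlinarith [h1, h2]
  · intro s
    have hv : ∀ i : Fin n, 0 ≤ vhi i := fun i =>
      le_trans (by nlinarith [hdiag (Sum.inl i), hdiag (Sum.inr i)]) (hmag i).2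
    refine ⟨by simpa using hdiag s, ?_⟩
    cases s with
    | inl i =>
        have h := (hmag i).2
        have := Real.mul_self_sqrt (hv i)
        simp only [Sum.elim_inl, Pi.zero_apply, mul_zero, zero_mul, zero_sub, mul_neg,
          neg_neg, this]
        nlinarith [hdiag (Sum.inr i)]
    | inr i =>
        have h := (hmag i).2
        have := Real.mul_self_sqrt (hv i)
        simp only [Sum.elim_inr, Pi.zero_apply, mul_zero, zero_mul, zero_sub, mul_neg,
          neg_neg, this]
        nlinarith [hdiag (Sum.inl i)]
  · -- objective comparison
    have hYd : ∀ i, ybar i ^ 2 ≤ Ybar i i := by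
      intro i
      have h := hblock.dotProduct_mulVec_nonneg (Sum.elim (fun _ => -ybar i) (Pi.single i 1))
      simp [Matrix.fromBlocks_mulVec, sumElim_dotProduct_sumElim, Matrix.mulVec,
        dotProduct, Pi.single_apply, mul_ite] at h
      nlinarith [h]
    have hkey : 0 ≤ ((∑ r, φ r • A r + Matrix.diagonal γ') * Xbar).trace :=
      trace_mul_nonneg' hconv hXpsd
    have htrace_expand : ((∑ r, φ r • A r + Matrix.diagonal γ') * Xbar).trace
        = (∑ r, φ r * (A r * Xbar).trace) + ∑ s, γ' s * Xbar s s := by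
      rw [Matrix.add_mul, Matrix.trace_add, Matrix.sum_mul, Matrix.trace_sum]
      congr 1
      · exact Finset.sum_congr rfl fun r _ => by
          rw [Matrix.smul_mul, Matrix.trace_smul, smul_eq_mul]
      · simp [Matrix.trace, Matrix.diagonal_mul, Matrix.diag]
    have hφsum : (∑ r, φ r * ((0 : (Fin n ⊕ Fin n) → ℝ) ⬝ᵥ (A r).mulVec 0
        + a r ⬝ᵥ ybar - b r)) = -∑ r, φ r * (A r * Xbar).trace := by
      rw [← Finset.sum_neg_distrib]
      refine Finset.sum_congr rfl fun r _ => ?_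
      have h2 := heq r
      simp only [zero_dotProduct, zero_add]
      rw [show a r ⬝ᵥ ybar - b r = -(A r * Xbar).trace from by linarith]
      ring
    have hγsum : (∑ s, γ' s * (((0 : (Fin n ⊕ Fin n) → ℝ) s) ^ 2 - Xbar s s))
        = -∑ s, γ' s * Xbar s s := by
      rw [← Finset.sum_neg_distrib]
      refine Finset.sum_congr rfl fun s _ => by simp
    have h5 : (∑ i, (Cd i * ybar i ^ 2 + c i * ybar i))
        ≤ ∑ i, (Cd i * Ybar i i + c i * ybar i) :=
      Finset.sum_le_sum fun i _ =>
        add_le_add_left (mul_le_mul_of_nonneg_left (hYd i) (hCd i)) _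
    rw [hφsum, hγsum]
    rw [htrace_expand] at hkey
    linarith
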